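/- Let β > 2 and α = 2β, and define y_{α,β} = (9 / (2^{1+2/β} ζ(2β)^{2/β})) · (ζ_{ℤ²}(β) + √(ζ_{ℤ²}(β)² − (2/3^β) ζ(2β) (2 ζ_{A₂}(β) − ζ_{A₂}(2β))))^{2/β}, where ζ is the Riemann zeta function. Let (x, y) ∈ D with y > y_{α,β}, and let L(x,y) be the lattice of co-volume 1 with quadratic form Q(m,n) = (m + x n)²/y + y n². Then ζ_{L(x,y)}(α) − ζ_{A₂}(α) > (α/β)·(ζ_{L(x,y)}(β) − ζ_{A₂}(β)). -/

import Mathlib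

noncomputable section

/-- A point of the Euclidean plane with coordinates `a`, `b`. -/
def vec2 (a b : ℝ) : EuclideanSpace ℝ (Fin 2) := (WithLp.equiv 2 (Fin 2 → ℝ)).symm ![a, b]

/-- The lattice (as a set of points) generated by `u` and `v`. -/
def latticeSet (u v : EuclideanSpace ℝ (Fin 2)) : Set (EuclideanSpace ℝ (Fin 2)) :=
  {p | ∃ m n : ℤ, p = (m : ℝ) • u + (n : ℝ) • v}

/-- The determinant of the pair of plane vectors `(u, v)`. -/
def det2 (u v : EuclideanSpace ℝ (Fin 2)) : ℝ := u 0 * v 1 - u 1 * v 0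

/-- `L` is a two-dimensional lattice, i.e. `L = ℤu ⊕ ℤv` for a basis `(u,v)` of ℝ². -/
def IsLattice2 (L : Set (EuclideanSpace ℝ (Fin 2))) : Prop :=
  ∃ u v : EuclideanSpace ℝ (Fin 2), det2 u v ≠ 0 ∧ L = latticeSet u v

/-- `L` is a two-dimensional lattice of co-volume `V = |det(u,v)|`. -/
def IsLattice2OfCovol (L : Set (EuclideanSpace ℝ (Fin 2))) (V : ℝ) : Prop :=
  ∃ u v : EuclideanSpace ℝ (Fin 2), det2 u v ≠ 0 ∧ |det2 u v| = V ∧ L = latticeSet u v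

/-- The Epstein zeta function of a set of points: `ζ_L(s) = Σ'_{p ∈ L, p ≠ 0} |p|^{-s}`. -/
def epsteinZeta (L : Set (EuclideanSpace ℝ (Fin 2))) (s : ℝ) : ℝ :=
  ∑' p : ↥(L \ {0}), ‖(p : EuclideanSpace ℝ (Fin 2))‖ ^ (-s)

/-- The Lennard-Jones type energy `E_f[L] = Σ'_{p ∈ L, p ≠ 0} (a|p|^{-α} - b|p|^{-β})`. -/
def LJenergy (a b α β : ℝ) (L : Set (EuclideanSpace ℝ (Fin 2))) : ℝ :=
  ∑' p : ↥(L \ {0}),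
    (a * ‖(p : EuclideanSpace ℝ (Fin 2))‖ ^ (-α) - b * ‖(p : EuclideanSpace ℝ (Fin 2))‖ ^ (-β))

/-- The triangular lattice `A₂ = √(2/√3)·[ℤ(1,0) ⊕ ℤ(1/2,√3/2)]`, of co-volume 1. -/
def triangularLattice : Set (EuclideanSpace ℝ (Fin 2)) :=
  latticeSet (Real.sqrt (2 / Real.sqrt 3) • vec2 1 0)
    (Real.sqrt (2 / Real.sqrt 3) • vec2 (1 / 2) (Real.sqrt 3 / 2))

/-- The square lattice `ℤ² = ℤ(1,0) ⊕ ℤ(0,1)`. -/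
def squareLattice : Set (EuclideanSpace ℝ (Fin 2)) := latticeSet (vec2 1 0) (vec2 0 1)

/-- `L` is the image of `L'` under an orthogonal transformation of ℝ². -/
def IsRotationOf (L L' : Set (EuclideanSpace ℝ (Fin 2))) : Prop :=
  ∃ O : EuclideanSpace ℝ (Fin 2) ≃ₗᵢ[ℝ] EuclideanSpace ℝ (Fin 2), L = O '' L'

/-- The unit co-volume lattice parametrized by `(x, y)` in the half-fundamental domain:
`ℤu ⊕ ℤv` with `u = (1/√y, 0)` and `v = (x/√y, √y)`. -/
def latticeXY (x y : ℝ) : Set (EuclideanSpace ℝ (Fin 2)) :=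
  latticeSet (vec2 (1 / Real.sqrt y) 0) (vec2 (x / Real.sqrt y) (Real.sqrt y))

/-- The Riemann zeta function `ζ(s) = Σ_{m ≥ 1} m^{-s}` (real variable version). -/
def riemannZetaReal (s : ℝ) : ℝ := ∑' n : ℕ+, (n : ℝ) ^ (-s)

end

namespace LJaux
noncomputable section
open Real

def phi (x y : ℝ) (q : Fin 2 → ℤ) : EuclideanSpace ℝ (Fin 2) :=
  vec2 ((q 0 + x * q 1) / Real.sqrt y) (q 1 * Real.sqrt y)

lemma vec2_apply0 (a b : ℝ) : vec2 a b 0 = a := rfl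
lemma vec2_apply1 (a b : ℝ) : vec2 a b 1 = b := rfl

lemma norm_vec2 (a b : ℝ) : ‖vec2 a b‖ = Real.sqrt (a ^ 2 + b ^ 2) := by
  rw [EuclideanSpace.norm_eq]
  rw [Fin.sum_univ_two]
  rw [vec2_apply0, vec2_apply1, Real.norm_eq_abs, Real.norm_eq_abs, sq_abs, sq_abs]

lemma vec2_zero : vec2 0 0 = 0 := by
  ext i
  fin_cases i <;> rfl

lemma phi_zero (x y : ℝ) : phi x y 0 = 0 := by
  simp [phi, vec2_zero]

lemma norm_phi (x y : ℝ) (hy : 0 < y) (q : Fin 2 → ℤ) :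
    ‖phi x y q‖ = Real.sqrt (((q 0 : ℝ) + x * q 1) ^ 2 / y + y * (q 1 : ℝ) ^ 2) := by
  rw [phi, norm_vec2]
  congr 1
  rw [div_pow, mul_pow, Real.sq_sqrt hy.le]
  ring

lemma phi_injective (x y : ℝ) (hy : 0 < y) : Function.Injective (phi x y) := by
  intro q q' h
  have hsy : Real.sqrt y ≠ 0 := ne_of_gt (Real.sqrt_pos.2 hy)
  have h1 : (q 1 : ℝ) * Real.sqrt y = (q' 1 : ℝ) * Real.sqrt y := congrArg (fun v => v 1) h
  have hq1 : (q 1 : ℝ) = q' 1 := mul_right_cancel₀ hsy h1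
  have hq1' : q 1 = q' 1 := by exact_mod_cast hq1
  have h0 : ((q 0 : ℝ) + x * q 1) / Real.sqrt y = ((q' 0 : ℝ) + x * q' 1) / Real.sqrt y :=
    congrArg (fun v => v 0) h
  have hq0 : (q 0 : ℝ) = q' 0 := by
    field_simp at h0
    rw [hq1] at h0
    linarith
  have hq0' : q 0 = q' 0 := by exact_mod_cast hq0
  funext i
  fin_cases i
  · exact hq0'
  · exact hq1'

lemma phi_ne_zero (x y : ℝ) (hy : 0 < y) {q : Fin 2 → ℤ} (hq : q ≠ 0) : phi x y q ≠ 0 := by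
  intro h
  exact hq (phi_injective x y hy (h.trans (phi_zero x y).symm))

lemma latticeXY_eq_range (x y : ℝ) : latticeXY x y = Set.range (phi x y) := by
  have key : ∀ m n : ℤ, (m : ℝ) • vec2 (1 / Real.sqrt y) 0 + (n : ℝ) • vec2 (x / Real.sqrt y) (Real.sqrt y)
      = phi x y ![m, n] := by
    intro m n
    ext i
    fin_cases i
    · show (m : ℝ) * (1 / Real.sqrt y) + (n : ℝ) * (x / Real.sqrt y)
        = ((m : ℝ) + x * (n : ℝ)) / Real.sqrt y
      ring
    · show (m : ℝ) * 0 + (n : ℝ) * Real.sqrt y = (n : ℝ) * Real.sqrt y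
      ring
  ext p
  constructor
  · rintro ⟨m, n, rfl⟩
    exact ⟨![m, n], (key m n).symm⟩
  · rintro ⟨q, rfl⟩
    refine ⟨q 0, q 1, ?_⟩
    rw [key (q 0) (q 1)]
    congr 1
    ext i; fin_cases i <;> rfl


def latEquiv (x y : ℝ) (hy : 0 < y) :
    {q : Fin 2 → ℤ // q ≠ 0} ≃ ↥(latticeXY x y \ {0}) := by
  apply Equiv.ofBijective (fun q => ⟨phi x y q.1,
    ⟨by rw [latticeXY_eq_range]; exact ⟨q.1, rfl⟩,
     by simpa using phi_ne_zero x y hy q.2⟩⟩)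
  constructor
  · intro q q' h
    exact Subtype.ext (phi_injective x y hy (congrArg Subtype.val h))
  · rintro ⟨p, hp1, hp2⟩
    have : p ∈ Set.range (phi x y) := by rwa [← latticeXY_eq_range]
    obtain ⟨q, rfl⟩ := this
    have hq : q ≠ 0 := by
      rintro rfl
      exact hp2 (by simpa using phi_zero x y)
    exact ⟨⟨q, hq⟩, rfl⟩

lemma epsteinZeta_latticeXY (x y : ℝ) (hy : 0 < y) (s : ℝ) :
    epsteinZeta (latticeXY x y) s = ∑' q : {q : Fin 2 → ℤ // q ≠ 0}, ‖phi x y q.1‖ ^ (-s) :=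
  ((latEquiv x y hy).tsum_eq (fun p : ↥(latticeXY x y \ {0}) =>
    ‖(p : EuclideanSpace ℝ (Fin 2))‖ ^ (-s))).symm

lemma squareLattice_eq : squareLattice = latticeXY 0 1 := by
  rw [squareLattice, latticeXY, Real.sqrt_one]
  norm_num


lemma sup_le_norm (q : Fin 2 → ℤ) : ‖q‖ ≤ ‖phi 0 1 q‖ := by
  rw [EisensteinSeries.norm_eq_max_natAbs, norm_phi 0 1 one_pos]
  have h : ((q 0 : ℝ) + 0 * q 1) ^ 2 / 1 + 1 * (q 1 : ℝ) ^ 2 = (q 0 : ℝ) ^ 2 + (q 1 : ℝ) ^ 2 := by ring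
  rw [h, Nat.cast_max]
  have h0 : ((q 0).natAbs : ℝ) ≤ Real.sqrt ((q 0 : ℝ) ^ 2 + (q 1 : ℝ) ^ 2) := by
    rw [Nat.cast_natAbs, Int.cast_abs]
    calc |(q 0 : ℝ)| = Real.sqrt ((q 0 : ℝ) ^ 2) := (Real.sqrt_sq_eq_abs _).symm
      _ ≤ _ := Real.sqrt_le_sqrt (by nlinarith [sq_nonneg ((q 1 : ℝ))])
  have h1 : ((q 1).natAbs : ℝ) ≤ Real.sqrt ((q 0 : ℝ) ^ 2 + (q 1 : ℝ) ^ 2) := by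
    rw [Nat.cast_natAbs, Int.cast_abs]
    calc |(q 1 : ℝ)| = Real.sqrt ((q 1 : ℝ) ^ 2) := (Real.sqrt_sq_eq_abs _).symm
      _ ≤ _ := Real.sqrt_le_sqrt (by nlinarith [sq_nonneg ((q 0 : ℝ))])
  exact max_le h0 h1

lemma rpow_flip {a b c s : ℝ} (hb : 0 < b) (hc : 0 < c) (hs : 0 ≤ s)
    (h : b / Real.sqrt c ≤ a) : a ^ (-s) ≤ c ^ (s / 2) * b ^ (-s) := by
  have hsc : 0 < Real.sqrt c := Real.sqrt_pos.2 hc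
  have h1 : a ^ (-s) ≤ (b / Real.sqrt c) ^ (-s) :=
    Real.rpow_le_rpow_of_nonpos (div_pos hb hsc) h (neg_nonpos.2 hs)
  refine h1.trans_eq ?_
  have h2 : (Real.sqrt c) ^ (-s) = c ^ (-(s / 2)) := by
    rw [Real.sqrt_eq_rpow, ← Real.rpow_mul hc.le]
    congr 1
    ring
  rw [Real.div_rpow hb.le hsc.le, h2, Real.rpow_neg hc.le, div_eq_mul_inv, inv_inv, mul_comm]

section core
variable {x y : ℝ} (hy : 0 < y) (hx0 : 0 ≤ x) (hx : x ≤ 1 / 2) (hxy : 1 ≤ x ^ 2 + y ^ 2)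
include hy hx0 hx hxy

lemma core_poly (m n : ℝ) : (m ^ 2 + n ^ 2) / (2 * y) ≤ (m + x * n) ^ 2 / y + y * n ^ 2 := by
  have h2 : (0:ℝ) ≤ 2 * y ^ 2 - 2 * x ^ 2 - 1 := by nlinarith [mul_le_mul hx hx hx0 (by norm_num : (0:ℝ) ≤ 1/2)]
  have key : m ^ 2 + n ^ 2 ≤ 2 * (m + x * n) ^ 2 + 2 * y ^ 2 * n ^ 2 := by
    nlinarith [sq_nonneg (m + 2 * x * n), mul_nonneg h2 (sq_nonneg n)]
  have heq : (2 * (m + x * n) ^ 2 + 2 * y ^ 2 * n ^ 2) / (2 * y) = (m + x * n) ^ 2 / y + y * n ^ 2 := by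
    field_simp
  calc (m ^ 2 + n ^ 2) / (2 * y) ≤ (2 * (m + x * n) ^ 2 + 2 * y ^ 2 * n ^ 2) / (2 * y) := by
        exact div_le_div_of_nonneg_right key (by linarith)
    _ = _ := heq

lemma core_norm (q : Fin 2 → ℤ) : ‖phi 0 1 q‖ / Real.sqrt (2 * y) ≤ ‖phi x y q‖ := by
  have h2y : (0:ℝ) < 2 * y := by linarith
  rw [norm_phi x y hy, norm_phi 0 1 one_pos, ← Real.sqrt_div (by positivity) (2 * y)]
  apply Real.sqrt_le_sqrt
  have : ((q 0 : ℝ) + 0 * q 1) ^ 2 / 1 + 1 * (q 1 : ℝ) ^ 2 = (q 0 : ℝ) ^ 2 + (q 1 : ℝ) ^ 2 := by ring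
  rw [this]
  exact core_poly hy hx0 hx hxy _ _


lemma bound1 {s : ℝ} (hs : 0 ≤ s) {q : Fin 2 → ℤ} (hq : q ≠ 0) :
    ‖phi x y q‖ ^ (-s) ≤ (2 * y) ^ (s / 2) * ‖phi 0 1 q‖ ^ (-s) :=
  rpow_flip (norm_pos_iff.2 (phi_ne_zero 0 1 one_pos hq)) (by linarith) hs
    (core_norm hy hx0 hx hxy q)

lemma bound2 {s : ℝ} (hs : 0 ≤ s) {q : Fin 2 → ℤ} (hq : q ≠ 0) :
    ‖phi x y q‖ ^ (-s) ≤ (2 * y) ^ (s / 2) * ‖q‖ ^ (-s) := by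
  have hq0 : (0:ℝ) < ‖q‖ := norm_pos_iff.2 hq
  refine rpow_flip hq0 (by linarith) hs ?_
  calc ‖q‖ / Real.sqrt (2 * y) ≤ ‖phi 0 1 q‖ / Real.sqrt (2 * y) :=
        div_le_div_of_nonneg_right (sup_le_norm q) (Real.sqrt_nonneg _)
    _ ≤ _ := core_norm hy hx0 hx hxy q


lemma summable_phi {s : ℝ} (hs : 2 < s) :
    Summable fun q : {q : Fin 2 → ℤ // q ≠ 0} => ‖phi x y q.1‖ ^ (-s) := by
  have hmaj : Summable fun q : {q : Fin 2 → ℤ // q ≠ 0} => (2 * y) ^ (s / 2) * ‖q.1‖ ^ (-s) :=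
    ((EisensteinSeries.summable_one_div_norm_rpow hs).mul_left ((2 * y) ^ (s / 2))).comp_injective
      Subtype.val_injective
  exact Summable.of_nonneg_of_le (fun q => Real.rpow_nonneg (norm_nonneg _) _)
    (fun q => bound2 hy hx0 hx hxy (by linarith) q.2) hmaj

lemma zeta_upper {s : ℝ} (hs : 2 < s) :
    epsteinZeta (latticeXY x y) s ≤ (2 * y) ^ (s / 2) * epsteinZeta squareLattice s := by
  rw [epsteinZeta_latticeXY x y hy, squareLattice_eq, epsteinZeta_latticeXY 0 1 one_pos,
    ← tsum_mul_left]
  refine Summable.tsum_le_tsum (fun q => bound1 hy hx0 hx hxy (by linarith) q.2)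
    (summable_phi hy hx0 hx hxy hs) ?_
  exact Summable.mul_left _ (summable_phi one_pos le_rfl (by norm_num) (by norm_num) hs)

end core

lemma div_sqrt_rpow {b c : ℝ} (hb : 0 ≤ b) (hc : 0 < c) (s : ℝ) :
    (b / Real.sqrt c) ^ (-s) = c ^ (s / 2) * b ^ (-s) := by
  have h2 : (Real.sqrt c) ^ (-s) = c ^ (-(s / 2)) := by
    rw [Real.sqrt_eq_rpow, ← Real.rpow_mul hc.le]
    congr 1
    ring
  rw [Real.div_rpow hb (Real.sqrt_nonneg c), h2, Real.rpow_neg hc.le, div_eq_mul_inv, inv_inv,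
    mul_comm]

lemma summable_pnat_rpow {s : ℝ} (hs : 1 < s) : Summable fun k : ℕ+ => (k : ℝ) ^ (-s) :=
  (Real.summable_nat_rpow.mpr (by linarith : -s < -1)).comp_injective PNat.coe_injective

lemma riemannZetaReal_pos {s : ℝ} (hs : 1 < s) : 0 < riemannZetaReal s := by
  rw [riemannZetaReal]
  refine Summable.tsum_pos (summable_pnat_rpow hs) (fun k => Real.rpow_nonneg (by positivity) _) 1 ?_
  norm_num

def jmap (k : ℕ+) : {q : Fin 2 → ℤ // q ≠ 0} :=
  ⟨![(k : ℤ), 0], by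
    intro h
    have h0 : (k : ℤ) = 0 := by simpa using congrFun h 0
    exact k.ne_zero (by exact_mod_cast h0)⟩

lemma jmap_injective : Function.Injective jmap := by
  intro k k' h
  have h0 : (k : ℤ) = (k' : ℤ) := by simpa [jmap] using congrFun (congrArg Subtype.val h) 0
  exact_mod_cast h0

section lower
variable {x y : ℝ} (hy : 0 < y) (hx0 : 0 ≤ x) (hx : x ≤ 1 / 2) (hxy : 1 ≤ x ^ 2 + y ^ 2)
include hy hx0 hx hxy

lemma zeta_lower {s : ℝ} (hs : 2 < s) :
    riemannZetaReal s * y ^ (s / 2) ≤ epsteinZeta (latticeXY x y) s := by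
  rw [epsteinZeta_latticeXY x y hy]
  have hterm : ∀ k : ℕ+, y ^ (s / 2) * (k : ℝ) ^ (-s) = ‖phi x y (jmap k).1‖ ^ (-s) := by
    intro k
    have hn : ‖phi x y (jmap k).1‖ = (k : ℝ) / Real.sqrt y := by
      rw [jmap, norm_phi x y hy]
      have h0 : ((![(k : ℤ), 0] : Fin 2 → ℤ) 0 : ℝ) = (k : ℝ) := by norm_num
      have h1 : ((![(k : ℤ), 0] : Fin 2 → ℤ) 1 : ℝ) = 0 := by norm_num
      rw [h0, h1, show ((k : ℝ) + x * 0) ^ 2 / y + y * (0 : ℝ) ^ 2 = (k : ℝ) ^ 2 / y by ring,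
        Real.sqrt_div (sq_nonneg _), Real.sqrt_sq (by positivity)]
    rw [hn, div_sqrt_rpow (by positivity) hy]
  have hle : riemannZetaReal s * y ^ (s / 2) = ∑' k : ℕ+, y ^ (s / 2) * (k : ℝ) ^ (-s) := by
    rw [tsum_mul_left, riemannZetaReal, mul_comm]
  rw [hle]
  refine Summable.tsum_le_tsum_of_inj jmap jmap_injective
    (fun q _ => Real.rpow_nonneg (norm_nonneg _) _) (fun k => le_of_eq (hterm k))
    ((summable_pnat_rpow (by linarith)).mul_left _) (summable_phi hy hx0 hx hxy hs)

end lower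

lemma epsteinZeta_square_nonneg (s : ℝ) : 0 ≤ epsteinZeta squareLattice s := by
  rw [squareLattice_eq, epsteinZeta_latticeXY 0 1 one_pos]
  exact tsum_nonneg fun q => Real.rpow_nonneg (norm_nonneg _) _

end
end LJaux


lemma quad_alg (Z2 Zs A1 A2 a b zz : ℝ)
    (hZ2 : 0 < Z2) (ha : 0 < a)
    (h2t : 2 * (b * b) ≤ a)
    (h1 : (b * 2 * Z2 * zz - a * Zs) ^ 2 > a ^ 2 * Zs ^ 2 - 2 * a * Z2 * (2 * A1 - A2)) :
    Z2 * zz ^ 2 - 2 * (b * Zs) * zz + (2 * A1 - A2) > 0 := by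
  have hauxe : 0 ≤ (2 * a - 4 * (b * b)) * (Z2 * zz) ^ 2 :=
    mul_nonneg (by linarith) (sq_nonneg _)
  by_contra hcon
  push_neg at hcon
  have hpos : 0 < 2 * a * Z2 := by positivity
  have hprod : 2 * a * Z2 * (Z2 * zz ^ 2 - 2 * (b * Zs) * zz + (2 * A1 - A2)) ≤ 0 :=
    mul_nonpos_of_nonneg_of_nonpos hpos.le hcon
  nlinarith [h1, hauxe, hprod]


open LJaux

/-- Lemma 1, case `α = 2β`: for `(x,y) ∈ D` with
`y > y_{α,β} = (9/(2^{1+2/β}ζ(2β)^{2/β}))·(ζ_{ℤ²}(β) + √(ζ_{ℤ²}(β)² - (2/3^β)ζ(2β)(2ζ_{A₂}(β) - ζ_{A₂}(2β))))^{2/β}`,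
one has `ζ_{L(x,y)}(α) - ζ_{A₂}(α) > (α/β)(ζ_{L(x,y)}(β) - ζ_{A₂}(β))`. -/
theorem quotient_bound_above_threshold_special
    (β : ℝ) (hβ : 2 < β) (α : ℝ) (hα : α = 2 * β) (yab : ℝ)
    (hyab : yab = 9 / ((2 : ℝ) ^ (1 + 2 / β) * riemannZetaReal (2 * β) ^ (2 / β)) *
      (epsteinZeta squareLattice β +
        Real.sqrt (epsteinZeta squareLattice β ^ 2 -
          2 / (3 : ℝ) ^ β * riemannZetaReal (2 * β) *
            (2 * epsteinZeta triangularLattice β -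
              epsteinZeta triangularLattice (2 * β)))) ^ (2 / β))
    (x y : ℝ) (hy : 0 < y) (hx0 : 0 ≤ x) (hx : x ≤ 1 / 2) (hxy : 1 ≤ x ^ 2 + y ^ 2)
    (hythr : yab < y) :
    epsteinZeta (latticeXY x y) α - epsteinZeta triangularLattice α >
      (α / β) * (epsteinZeta (latticeXY x y) β - epsteinZeta triangularLattice β) := by
  subst hα
  have hβ0 : (0:ℝ) < β := by linarith
  set Z2 := riemannZetaReal (2 * β) with hZ2def
  set Zs := epsteinZeta squareLattice β with hZsdef
  set ZA1 := epsteinZeta triangularLattice β with hZA1def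
  set ZA2 := epsteinZeta triangularLattice (2 * β) with hZA2def
  set S : ℝ := Zs ^ 2 - 2 / (3 : ℝ) ^ β * Z2 * (2 * ZA1 - ZA2) with hSdef
  set T : ℝ := Zs + Real.sqrt S with hTdef
  set zz : ℝ := y ^ (β / 2) with hzzdef
  have hZ2pos : 0 < Z2 := riemannZetaReal_pos (by linarith)
  have hZsnn : 0 ≤ Zs := epsteinZeta_square_nonneg β
  have hTnn : 0 ≤ T := by positivity
  have hsqSnn : 0 ≤ Real.sqrt S := Real.sqrt_nonneg S
  have hepos : (0:ℝ) < (2:ℝ) ^ (β / 2) := Real.rpow_pos_of_pos two_pos _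
  have ht3pos : (0:ℝ) < (3:ℝ) ^ β := Real.rpow_pos_of_pos (by norm_num) _
  have he2 : (2:ℝ) ^ (β / 2) * (2:ℝ) ^ (β / 2) = (2:ℝ) ^ β := by
    rw [← Real.rpow_add two_pos]; congr 1; ring
  have h2t : 2 * (2:ℝ) ^ β ≤ (3:ℝ) ^ β := by
    have h32 : (2:ℝ) ≤ ((3:ℝ)/2) ^ β := by
      calc (2:ℝ) ≤ ((3:ℝ)/2) ^ (2:ℝ) := by
            rw [show ((2:ℝ):ℝ) = ((2:ℕ):ℝ) by norm_num, Real.rpow_natCast]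
            norm_num
        _ ≤ ((3:ℝ)/2) ^ β := Real.rpow_le_rpow_of_exponent_le (by norm_num) hβ.le
    calc 2 * (2:ℝ) ^ β ≤ ((3:ℝ)/2) ^ β * (2:ℝ) ^ β :=
          mul_le_mul_of_nonneg_right h32 (Real.rpow_nonneg (by norm_num) β)
      _ = (3:ℝ) ^ β := by
          rw [← Real.mul_rpow (by norm_num) (by norm_num)]
          norm_num
  -- threshold computation
  have hyabnn : 0 ≤ yab := by rw [hyab]; positivity
  have hW : yab ^ (β / 2) = (3:ℝ) ^ β * T / ((2:ℝ) ^ (β / 2) * 2 * Z2) := by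
    rw [hyab]
    rw [Real.mul_rpow (by positivity) (Real.rpow_nonneg hTnn _)]
    rw [← Real.rpow_mul hTnn, show 2 / β * (β / 2) = 1 by field_simp, Real.rpow_one]
    rw [Real.div_rpow (by norm_num : (0:ℝ) ≤ 9) (by positivity)]
    rw [Real.mul_rpow (by positivity) (Real.rpow_nonneg hZ2pos.le _)]
    rw [← Real.rpow_mul (by norm_num : (0:ℝ) ≤ 2), ← Real.rpow_mul hZ2pos.le,
      show 2 / β * (β / 2) = 1 by field_simp, Real.rpow_one,
      show (1 + 2 / β) * (β / 2) = β / 2 + 1 by field_simp]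
    rw [Real.rpow_add two_pos, Real.rpow_one]
    rw [show (9:ℝ) = (3:ℝ) ^ (2:ℝ) by
      rw [show ((2:ℝ):ℝ) = ((2:ℕ):ℝ) by norm_num, Real.rpow_natCast]; norm_num]
    rw [← Real.rpow_mul (by norm_num : (0:ℝ) ≤ 3), show (2:ℝ) * (β / 2) = β by ring]
    ring
  have hzgt : (3:ℝ) ^ β * T / ((2:ℝ) ^ (β / 2) * 2 * Z2) < zz := by
    rw [← hW, hzzdef]
    exact Real.rpow_lt_rpow hyabnn hythr (by positivity)
  have hP : (3:ℝ) ^ β * T < zz * ((2:ℝ) ^ (β / 2) * 2 * Z2) :=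
    (div_lt_iff₀ (by positivity)).mp hzgt
  -- squaring
  have hb : (3:ℝ) ^ β * Real.sqrt S < (2:ℝ) ^ (β / 2) * 2 * Z2 * zz - (3:ℝ) ^ β * Zs := by
    have : (3:ℝ) ^ β * T = (3:ℝ) ^ β * Zs + (3:ℝ) ^ β * Real.sqrt S := by
      rw [hTdef]; ring
    nlinarith [hP]
  have ha : (0:ℝ) ≤ (3:ℝ) ^ β * Real.sqrt S := by positivity
  have hc : ((3:ℝ) ^ β * Real.sqrt S) ^ 2 <
      ((2:ℝ) ^ (β / 2) * 2 * Z2 * zz - (3:ℝ) ^ β * Zs) ^ 2 := by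
    exact pow_lt_pow_left₀ hb ha two_ne_zero
  have hSle : S ≤ Real.sqrt S ^ 2 := by
    rcases le_or_gt 0 S with h | h
    · rw [Real.sq_sqrt h]
    · have : Real.sqrt S = 0 := Real.sqrt_eq_zero_of_nonpos h.le
      rw [this]; nlinarith
  have hd : ((3:ℝ) ^ β) ^ 2 * S ≤ ((3:ℝ) ^ β * Real.sqrt S) ^ 2 := by
    rw [mul_pow]
    exact mul_le_mul_of_nonneg_left hSle (by positivity)
  have hSexp : ((3:ℝ) ^ β) ^ 2 * S =
      ((3:ℝ) ^ β) ^ 2 * Zs ^ 2 - 2 * (3:ℝ) ^ β * Z2 * (2 * ZA1 - ZA2) := by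
    rw [hSdef]
    field_simp
  have h1 : ((2:ℝ) ^ (β / 2) * 2 * Z2 * zz - (3:ℝ) ^ β * Zs) ^ 2 >
      ((3:ℝ) ^ β) ^ 2 * Zs ^ 2 - 2 * (3:ℝ) ^ β * Z2 * (2 * ZA1 - ZA2) := by
    calc ((3:ℝ) ^ β) ^ 2 * Zs ^ 2 - 2 * (3:ℝ) ^ β * Z2 * (2 * ZA1 - ZA2)
        = ((3:ℝ) ^ β) ^ 2 * S := hSexp.symm
      _ ≤ ((3:ℝ) ^ β * Real.sqrt S) ^ 2 := hd
      _ < _ := hc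
  -- quadratic conclusion
  have hquad : Z2 * zz ^ 2 - 2 * ((2:ℝ) ^ (β / 2) * Zs) * zz + (2 * ZA1 - ZA2) > 0 :=
    quad_alg Z2 Zs ZA1 ZA2 ((3:ℝ) ^ β) ((2:ℝ) ^ (β / 2)) zz hZ2pos ht3pos
      (by rw [he2]; exact h2t) h1
  -- zeta bounds
  have hzz2 : zz ^ 2 = y ^ β := by
    rw [hzzdef, ← Real.rpow_natCast (y ^ (β / 2)) 2, ← Real.rpow_mul hy.le]
    norm_num
  have hlow : Z2 * y ^ β ≤ epsteinZeta (latticeXY x y) (2 * β) := by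
    have := zeta_lower hy hx0 hx hxy (by linarith : 2 < 2 * β)
    rwa [show 2 * β / 2 = β by ring] at this
  have hup : epsteinZeta (latticeXY x y) β ≤ (2:ℝ) ^ (β / 2) * Zs * zz := by
    have h := zeta_upper hy hx0 hx hxy hβ
    have h2 : (2 * y) ^ (β / 2) = (2:ℝ) ^ (β / 2) * zz := by
      rw [Real.mul_rpow (by norm_num) hy.le, hzzdef]
    rw [h2] at h
    linarith [h]
  have h2β : 2 * β / β = 2 := by field_simp
  rw [h2β]
  rw [← hzz2] at hlow
  linarith only [hlow, hup, hquad]
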